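/- arXiv:2010.16353 — 2 statements merged into one kernel-verified Lean document; each statement's English description precedes it below -/
import Mathlib

section
/- Define A : ℕ × ℕ × ℕ → ℕ (output length with accumulator) by A(0, m, a) = 1 + a, A(d+1, 0, a) = a, and A(d+1, m+1, a) = A(d+1, m, A(d, m, a)). Then for all d, m, a: A(d, m, a) = C(m, d) + a. -/
/-- Output length of `amp_d` with input length `m` and accumulator length `a`. -/
def ampAccLen : ℕ → ℕ → ℕ → ℕ
  | 0, _, a => 1 + a
  | _ + 1, 0, a => a
  | d + 1, m + 1, a => ampAccLen (d + 1) m (ampAccLen d m a)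

/-- `A(d, m, a) = C(m, d) + a` for all `d, m, a`. -/
theorem ampAccLen_eq (d m a : ℕ) : ampAccLen d m a = m.choose d + a := by
  induction d generalizing m a with
  | zero => simp [ampAccLen, Nat.add_comm]
  | succ d ih =>
    induction m generalizing a with
    | zero => simp [ampAccLen]
    | succ m ihm =>
      rw [ampAccLen, ihm, ih, Nat.choose_succ_succ]
      ring
end

section
/- Let q_{d-1} = (q_1, ..., q_{d-1}) be a vector of non-negative rationals representing n^{d-1} (i.e., n^{d-1} = sum_i q_i * C(n,i) for all n) with q_1 = 1 for d ≥ 2. Define q_d = (q_1, 2(q_1 + q_2), 3(q_2 + q_3), ..., (d-1)(q_{d-2} + q_{d-1}), (d-1) q_{d-1}). Then componentwise, q_{d-1} + q_d ≤ shift(q_d), where shift(q_d) is the additive shift (q_d[1] + q_d[2], ..., q_d[d-1] + q_d[d], q_d[d]) and the shorter vector q_{d-1} is padded with zeros. -/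
/-- The annotation `q_d` of `amp_d`, built from the annotation `q` representing
`n ^ (d - 1)`, satisfies the componentwise inequality
`q_{d-1} + q_d ≤ shift (q_d)` (with `q_{d-1}` padded by zeros). -/
theorem amp_annotation_split (d : ℕ) (hd : 2 ≤ d) (q qd : ℕ → ℚ)
    (hnn : ∀ i, 0 ≤ q i) (hq0 : q 0 = 0) (hq1 : q 1 = 1)
    (hrep : ∀ n : ℕ,
      (n : ℚ) ^ (d - 1) = ∑ i ∈ Finset.Icc 1 (d - 1), q i * (n.choose i : ℚ))
    (hqd : ∀ i ∈ Finset.Icc 1 (d - 1), qd i = (i : ℚ) * (q (i - 1) + q i))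
    (hqdd : qd d = ((d : ℚ) - 1) * q (d - 1)) :
    ∀ i ∈ Finset.Icc 1 d,
      (if i ≤ d - 1 then q i else 0) + qd i ≤
        (if i < d then qd i + qd (i + 1) else qd i) := by
  intro i hi
  rw [Finset.mem_Icc] at hi
  obtain ⟨hi1, hid⟩ := hi
  rcases lt_or_eq_of_le hid with hlt | heq
  · have hle : i ≤ d - 1 := Nat.le_sub_one_of_lt hlt
    rw [if_pos hle, if_pos hlt]
    have key : q i ≤ qd (i + 1) := by
      rcases lt_or_eq_of_le (Nat.succ_le_of_lt hlt) with hlt' | heq'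
      · have h1 : i + 1 ≤ d - 1 := Nat.le_sub_one_of_lt hlt'
        have := hqd (i + 1) (Finset.mem_Icc.mpr ⟨Nat.le_add_left 1 i, h1⟩)
        rw [this]
        simp only [Nat.add_sub_cancel]
        have h2 : (1 : ℚ) ≤ (i + 1 : ℕ) := by exact_mod_cast Nat.le_add_left 1 i
        nlinarith [hnn i, hnn (i + 1)]
      · have hi' : i = d - 1 := by omega
        rw [show i + 1 = d from heq', hqdd, ← hi']
        have h2 : (1 : ℚ) ≤ (d : ℚ) - 1 := by
          have : (2 : ℚ) ≤ (d : ℚ) := by exact_mod_cast hd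
          linarith
        nlinarith [hnn i]
    linarith
  · subst heq
    have h1 : ¬ i ≤ i - 1 := by omega
    rw [if_neg h1, if_neg (lt_irrefl i)]
    linarith
end
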